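/- Let σ : ℝ → ℝ be Lipschitz continuous with σ(x) ≠ 0 for every x ∈ ℝ, and fix a ∈ ℝ. Then H(x) = ∫_a^x dt/σ(t) is a bijection from ℝ onto ℝ. -/

import Mathlib

open MeasureTheory Filter

private lemma log_antideriv {c K a : ℝ} (hc : 0 < c) (hK : 0 < K) {t : ℝ}
    (ht : 0 < c + K * (t - a)) :
    HasDerivAt (fun t => K⁻¹ * Real.log (c + K * (t - a))) ((c + K * (t - a))⁻¹) t := by
  have hu : HasDerivAt (fun t : ℝ => c + K * (t - a)) K t := by
    simpa using (((hasDerivAt_id t).sub_const a).const_mul K).const_add c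
  have := ((Real.hasDerivAt_log ht.ne').comp t hu).const_mul K⁻¹
  convert this using 1
  case e'_9 => rw [mul_comm (c + K * (t - a))⁻¹ K, inv_mul_cancel_left₀ hK.ne']
  all_goals rfl

private lemma key (σ : ℝ → ℝ) (L : NNReal) (hσ : LipschitzWith L σ)
    (hpos : ∀ x : ℝ, 0 < σ x) (a : ℝ) :
    Function.Bijective (fun x => ∫ t in a..x, 1 / σ t) := by
  set c := σ a with hc
  have hc0 : 0 < c := hpos a
  set K : ℝ := (L : ℝ) + 1 with hKdef
  have hK0 : 0 < K := by positivity
  have hbound : ∀ t : ℝ, σ t ≤ c + K * |t - a| := by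
    intro t
    have h1 : |σ t - σ a| ≤ (L : ℝ) * |t - a| := by
      simpa [Real.dist_eq] using hσ.dist_le_mul t a
    have h2 : (L : ℝ) * |t - a| ≤ K * |t - a| := by
      apply mul_le_mul_of_nonneg_right _ (abs_nonneg _)
      simp [hKdef]
    nlinarith [abs_le.1 h1]
  have hcont : Continuous σ := hσ.continuous
  have hfcont : Continuous (fun t => 1 / σ t) :=
    continuous_const.div hcont (fun t => (hpos t).ne')
  have hint : ∀ u v : ℝ, IntervalIntegrable (fun t => 1 / σ t) volume u v :=
    fun u v => hfcont.intervalIntegrable u v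
  set H : ℝ → ℝ := fun x => ∫ t in a..x, 1 / σ t with hHdef
  have hHcont : Continuous H := intervalIntegral.continuous_primitive hint a
  have hmono : StrictMono H := by
    intro x y hxy
    have : H y = H x + ∫ t in x..y, 1 / σ t :=
      (intervalIntegral.integral_add_adjacent_intervals (hint a x) (hint x y)).symm
    rw [this]
    have hp : 0 < ∫ t in x..y, 1 / σ t :=
      intervalIntegral.intervalIntegral_pos_of_pos (hint x y)
        (fun t => one_div_pos.2 (hpos t)) hxy
    linarith
  have hlow : ∀ x : ℝ, a ≤ x →
      K⁻¹ * Real.log (c + K * (x - a)) - K⁻¹ * Real.log c ≤ H x := by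
    intro x hax
    have hposu : ∀ t ∈ Set.uIcc a x, 0 < c + K * (t - a) := by
      intro t ht
      rw [Set.uIcc_of_le hax] at ht
      nlinarith [ht.1, ht.2]
    have hgint : IntervalIntegrable (fun t => (c + K * (t - a))⁻¹) volume a x := by
      apply ContinuousOn.intervalIntegrable
      exact ContinuousOn.inv₀ (by fun_prop) (fun t ht => (hposu t ht).ne')
    have heq : (∫ t in a..x, (c + K * (t - a))⁻¹) =
        K⁻¹ * Real.log (c + K * (x - a)) - K⁻¹ * Real.log c := by
      rw [intervalIntegral.integral_eq_sub_of_hasDerivAt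
        (fun t ht => log_antideriv hc0 hK0 (hposu t ht)) hgint]
      simp
    rw [← heq]
    apply intervalIntegral.integral_mono_on hax hgint (hint a x)
    intro t ht
    have h1 : 0 < c + K * (t - a) := hposu t (by rw [Set.uIcc_of_le hax]; exact ht)
    have h2 : σ t ≤ c + K * (t - a) := by
      have := hbound t
      rw [abs_of_nonneg (by linarith [ht.1])] at this
      exact this
    rw [one_div]
    exact inv_anti₀ (hpos t) h2
  have hhigh : ∀ x : ℝ, x ≤ a →
      H x ≤ -(K⁻¹ * Real.log (c + K * (a - x))) + K⁻¹ * Real.log c := by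
    intro x hax
    have hposu : ∀ t ∈ Set.uIcc x a, 0 < c + K * (a - t) := by
      intro t ht
      rw [Set.uIcc_of_le hax] at ht
      nlinarith [ht.1, ht.2]
    have hderiv : ∀ t ∈ Set.uIcc x a,
        HasDerivAt (fun t => -(K⁻¹ * Real.log (c + K * (a - t)))) ((c + K * (a - t))⁻¹) t := by
      intro t ht
      have hu : HasDerivAt (fun t : ℝ => c + K * (a - t)) (-K) t := by
        simpa using (((hasDerivAt_id t).const_sub a).const_mul K).const_add c
      have := (((Real.hasDerivAt_log (hposu t ht).ne').comp t hu).const_mul K⁻¹).neg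
      convert this using 1
      case e'_9 => rw [mul_neg, mul_neg, neg_neg, mul_comm (c + K * (a - t))⁻¹ K, inv_mul_cancel_left₀ hK0.ne']
      all_goals rfl
    have hgint : IntervalIntegrable (fun t => (c + K * (a - t))⁻¹) volume x a := by
      apply ContinuousOn.intervalIntegrable
      exact ContinuousOn.inv₀ (by fun_prop) (fun t ht => (hposu t ht).ne')
    have heq : (∫ t in x..a, (c + K * (a - t))⁻¹) =
        (K⁻¹ * Real.log (c + K * (a - x))) - K⁻¹ * Real.log c := by
      rw [intervalIntegral.integral_eq_sub_of_hasDerivAt hderiv hgint]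
      simp
      ring
    have hmonoint : (∫ t in x..a, (c + K * (a - t))⁻¹) ≤ ∫ t in x..a, 1 / σ t := by
      apply intervalIntegral.integral_mono_on hax hgint (hint x a)
      intro t ht
      have h1 : 0 < c + K * (a - t) := hposu t (by rw [Set.uIcc_of_le hax]; exact ht)
      have h2 : σ t ≤ c + K * (a - t) := by
        have := hbound t
        rw [abs_of_nonpos (by linarith [ht.2])] at this
        linarith
      rw [one_div]
      exact inv_anti₀ (hpos t) h2
    have hHx : H x = -∫ t in x..a, 1 / σ t := by
      rw [hHdef]
      simp [intervalIntegral.integral_symm a x]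
    rw [hHx, heq] at *
    linarith
  have htop : Tendsto H atTop atTop := by
    apply tendsto_atTop_mono' _ (eventually_atTop.2 ⟨a, hlow⟩)
    apply Tendsto.atTop_add _ tendsto_const_nhds
    apply Tendsto.const_mul_atTop (by positivity : (0:ℝ) < K⁻¹)
    apply Real.tendsto_log_atTop.comp
    apply tendsto_atTop_add_const_left _ c
    exact (tendsto_atTop_add_const_right _ _ tendsto_id).const_mul_atTop hK0
  have hbot : Tendsto H atBot atBot := by
    apply tendsto_atBot_mono' _ (eventually_atBot.2 ⟨a, hhigh⟩)
    apply Tendsto.atBot_add _ tendsto_const_nhds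
    apply Filter.tendsto_neg_atBot_iff.2
    apply Tendsto.const_mul_atTop (by positivity : (0:ℝ) < K⁻¹)
    apply Real.tendsto_log_atTop.comp
    apply tendsto_atTop_add_const_left _ c
    have hsub : Tendsto (fun x : ℝ => a - x) atBot atTop := by
      simpa [sub_eq_add_neg] using tendsto_atTop_add_const_left atBot a
        (tendsto_neg_atBot_atTop : Tendsto (fun x : ℝ => -x) atBot atTop)
    exact hsub.const_mul_atTop hK0
  exact ⟨hmono.injective, hHcont.surjective htop hbot⟩

/-- For σ Lipschitz and nonvanishing, H(x) = ∫_a^x dt/σ(t) is a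
bijection from ℝ onto ℝ. -/
theorem fokker_planck_H_bijective
    (σ : ℝ → ℝ) (L : NNReal) (hσ : LipschitzWith L σ)
    (hne : ∀ x : ℝ, σ x ≠ 0) (a : ℝ) :
    Function.Bijective (fun x => ∫ t in a..x, 1 / σ t) := by
  have hcont : Continuous σ := hσ.continuous
  have hsign : (∀ x, 0 < σ x) ∨ (∀ x, σ x < 0) := by
    by_contra h
    push_neg at h
    obtain ⟨⟨x, hx⟩, ⟨y, hy⟩⟩ := h
    have hx' : σ x < 0 := lt_of_le_of_ne hx (hne x)
    have hy' : 0 < σ y := lt_of_le_of_ne hy (Ne.symm (hne y))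
    have : (0:ℝ) ∈ Set.uIcc (σ x) (σ y) :=
      Set.mem_uIcc.2 (Or.inl ⟨hx'.le, hy'.le⟩)
    obtain ⟨z, _, hz⟩ := intermediate_value_uIcc hcont.continuousOn this
    exact hne z hz
  rcases hsign with hpos | hneg
  · exact key σ L hσ hpos a
  · have hkey := key (fun x => -σ x) L hσ.neg (fun x => by simpa using hneg x) a
    have heq : (fun x => ∫ t in a..x, 1 / σ t) =
        (fun y => -y) ∘ (fun x => ∫ t in a..x, 1 / (-σ t)) := by
      funext x
      simp only [Function.comp, ← intervalIntegral.integral_neg]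
      apply intervalIntegral.integral_congr
      intro t _
      field_simp
    rw [heq]
    exact (neg_involutive.bijective).comp hkey
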